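/- Let x* ∈ ℝ^E with x* ≥ 0 and suppose c_p < x*(E) < c_{p+1} for some p ∈ {1, …, m−1}. Set δ := (x*(E) − c_p)/(c_{p+1} − c_p), so 0 < δ < 1. Then for every F ⊆ E, the following are equivalent: (c_{p+1} − r(F))·x*(F) − (r(F) − c_p)·x*(E∖F) > c_p·(c_{p+1} − r(F)) if and only if (1/δ)·x*(F) − r(F) > c_p·(1 − δ)/δ. In particular, the separation problem for the rank induced forbidden set inequalities reduces to maximizing x'(F) − r(F) over F ⊆ E for the scaled vector x' := (1/δ)·x*. -/

import Mathlib

open Finset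

/-- A (loopless) matroid on a finite ground set, given by its independent sets. -/
structure FinMatroid (α : Type*) [Fintype α] [DecidableEq α] where
  Indep : Finset α → Prop
  empty_indep : Indep ∅
  subset_indep : ∀ ⦃I J : Finset α⦄, Indep J → I ⊆ J → Indep I
  exchange : ∀ ⦃I J : Finset α⦄, Indep I → Indep J → I.card < J.card →
    ∃ e ∈ J \ I, Indep (insert e I)
  loopless : ∀ e : α, Indep {e}

variable {α : Type*} [Fintype α] [DecidableEq α]

open Classical in
/-- The rank of a set: the maximum cardinality of an independent subset. -/
noncomputable def FinMatroid.r (M : FinMatroid α) (F : Finset α) : ℕ :=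
  (F.powerset.filter M.Indep).sup Finset.card

/-- incidence vector -/
noncomputable def incVec (I : Finset α) : α → ℝ := fun e => if e ∈ I then 1 else 0

/-- x(S) = ∑_{e ∈ S} x_e -/
noncomputable def fsum (x : α → ℝ) (S : Finset α) : ℝ := ∑ e ∈ S, x e

/-- closed set -/
def FinMatroid.ClosedSet (M : FinMatroid α) (F : Finset α) : Prop :=
  ∀ e ∉ F, M.r F < M.r (insert e F)

/-- F is separable -/
def FinMatroid.Separable (M : FinMatroid α) (F : Finset α) : Prop :=
  ∃ F₁ F₂ : Finset α, F₁ ≠ ∅ ∧ F₂ ≠ ∅ ∧ Disjoint F₁ F₂ ∧ F₁ ∪ F₂ = F ∧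
    M.r F₁ + M.r F₂ ≤ M.r F

def FinMatroid.Inseparable (M : FinMatroid α) (F : Finset α) : Prop :=
  ¬ M.Separable F

/-- the k-rank r^k(F) = k - r(E \ F), as an integer -/
noncomputable def FinMatroid.krank (M : FinMatroid α) (k : ℕ) (F : Finset α) : ℤ :=
  (k : ℤ) - (M.r Fᶜ : ℤ)

/-- F is k-separable -/
noncomputable def FinMatroid.kSeparable (M : FinMatroid α) (k : ℕ) (F : Finset α) : Prop :=
  ∃ F₁ F₂ : Finset α, F₁ ≠ ∅ ∧ F₂ ≠ ∅ ∧ Disjoint F₁ F₂ ∧ F₁ ∪ F₂ = F ∧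
    M.krank k F₁ + M.krank k F₂ = M.krank k F

noncomputable def FinMatroid.kInseparable (M : FinMatroid α) (k : ℕ) (F : Finset α) : Prop :=
  ¬ M.kSeparable k F

/-- convex hull of incidence vectors of independent sets of cardinality exactly k -/
noncomputable def exactPolytope (M : FinMatroid α) (k : ℕ) : Set (α → ℝ) :=
  convexHull ℝ {x | ∃ I : Finset α, M.Indep I ∧ I.card = k ∧ x = incVec I}

/-- the cardinality constrained matroid polytope P^c(E) -/
noncomputable def cardPolytope (M : FinMatroid α) {m : ℕ} (c : Fin m → ℕ) : Set (α → ℝ) :=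
  convexHull ℝ {x | ∃ I : Finset α, M.Indep I ∧ (∃ p : Fin m, I.card = c p) ∧ x = incVec I}

/-- dimension of (the affine hull of) a subset of ℝ^E -/
noncomputable def polyDim (s : Set (α → ℝ)) : ℕ :=
  Module.finrank ℝ (affineSpan ℝ s).direction

/-- `a · x ≤ a₀` defines a facet of `P` -/
noncomputable def IsFacet (P : Set (α → ℝ)) (a : α → ℝ) (a₀ : ℝ) : Prop :=
  (∀ x ∈ P, ∑ e, a e * x e ≤ a₀) ∧
  polyDim {x ∈ P | ∑ e, a e * x e = a₀} + 1 = polyDim P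


/-- the separation problem for the forbidden set inequalities
reduces to maximizing x'(F) - r(F) for the scaled vector x' = (1/δ)·x*. -/
theorem separation_scaling_equivalence {α : Type*} [Fintype α] [DecidableEq α]
    (M : FinMatroid α)
    {m : ℕ} (c : Fin m → ℕ) (hm : 2 ≤ m) (hmono : StrictMono c)
    (hlast : c ⟨m - 1, by omega⟩ ≤ M.r Finset.univ)
    (x : α → ℝ) (hnn : ∀ e : α, 0 ≤ x e)
    (p : Fin m) (hp : p.val + 1 < m)
    (hlo : (c p : ℝ) < fsum x Finset.univ)
    (hhi : fsum x Finset.univ < (c ⟨p.val + 1, hp⟩ : ℝ))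
    (δ : ℝ) (hδ : δ = (fsum x Finset.univ - (c p : ℝ)) / ((c ⟨p.val + 1, hp⟩ : ℝ) - (c p : ℝ))) :
    0 < δ ∧ δ < 1 ∧
    ∀ F : Finset α,
      ((c p : ℝ) * ((c ⟨p.val + 1, hp⟩ : ℝ) - M.r F) < ((c ⟨p.val + 1, hp⟩ : ℝ) - M.r F) * fsum x F - ((M.r F : ℝ) - c p) * fsum x Fᶜ ↔
        (c p : ℝ) * (1 - δ) / δ < (1 / δ) * fsum x F - (M.r F : ℝ)) := by
  set a : ℝ := (c p : ℝ) with ha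
  set b : ℝ := (c ⟨p.val + 1, hp⟩ : ℝ) with hb
  set s : ℝ := fsum x Finset.univ with hs
  have hab : a < b := by
    rw [ha, hb]
    exact_mod_cast hmono (show p < ⟨p.val + 1, hp⟩ from by simp [Fin.lt_def])
  have hba : (0:ℝ) < b - a := by linarith
  have hδ0 : 0 < δ := by
    rw [hδ]; exact div_pos (by linarith) hba
  have hδ1 : δ < 1 := by
    rw [hδ, div_lt_one hba]; linarith
  have hkey : δ * (b - a) = s - a := by
    rw [hδ]; field_simp
  refine ⟨hδ0, hδ1, fun F => ?_⟩
  have hcompl : fsum x Fᶜ = s - fsum x F := by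
    rw [hs]
    have : fsum x Fᶜ + fsum x F = fsum x Finset.univ := by
      simpa [fsum] using Finset.sum_compl_add_sum F x
    linarith
  rw [hcompl]
  have h2 : (1/δ) * fsum x F - (M.r F : ℝ) = (fsum x F - (M.r F : ℝ) * δ) / δ := by
    field_simp
  rw [h2, div_lt_div_iff₀ hδ0 hδ0, mul_lt_mul_iff_of_pos_right hδ0]
  have h1 : a * (δ * (b - a)) = a * (s - a) := by rw [hkey]
  have h4 : (M.r F : ℝ) * (δ * (b - a)) = (M.r F : ℝ) * (s - a) := by rw [hkey]
  constructor <;> intro h <;> nlinarith [h1, h4, hba, h]
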